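/- There exists a unique real number x* > 0 satisfying exp(x*) = 1 + 2x*. Moreover: (i) 1.25 < x* < 1.27; (ii) the function g(x) = (1 − e^{−x})²/x attains its global maximum over (0, ∞) at x = x*, i.e. g(x) ≤ g(x*) for all x > 0; (iii) 6.5 < 16·g(x*) < 6.6; and (iv) 3.2 < 8·g(x*) < 3.3. -/

import Mathlib

private lemma exp_below' : Real.exp 1.25 < 3.5 := by
  have h4 : (Real.exp 1.25) ^ 4 < 3.5 ^ 4 := by
    have h : (Real.exp 1.25) ^ 4 = Real.exp 1 ^ 5 := by
      rw [← Real.exp_nat_mul, ← Real.exp_nat_mul]; norm_num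
    rw [h]
    calc Real.exp 1 ^ 5 < 2.7182818286 ^ 5 :=
          pow_lt_pow_left₀ Real.exp_one_lt_d9 (Real.exp_pos 1).le (by norm_num)
      _ < 3.5 ^ 4 := by norm_num
  exact lt_of_pow_lt_pow_left₀ 4 (by norm_num) h4

private lemma exp_above' : (3.52 : ℝ) < Real.exp 1.26 := by
  have h4 : (3.52:ℝ) ^ 50 < (Real.exp 1.26) ^ 50 := by
    have h : (Real.exp 1.26) ^ 50 = Real.exp 1 ^ 63 := by
      rw [← Real.exp_nat_mul, ← Real.exp_nat_mul]; norm_num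
    rw [h]
    calc (3.52:ℝ) ^ 50 < 2.7182818283 ^ 63 := by norm_num
      _ < Real.exp 1 ^ 63 :=
          pow_lt_pow_left₀ Real.exp_one_gt_d9 (by norm_num) (by norm_num)
  exact lt_of_pow_lt_pow_left₀ 50 (Real.exp_pos _).le h4

private lemma conv_lt' {c : ℝ} (hc : 0 < c) (hec : Real.exp c = 1 + 2 * c)
    {z : ℝ} (hz : 0 < z) (hzc : z < c) : Real.exp z < 1 + 2 * z := by
  have ha : (0:ℝ) < (c - z)/c := div_pos (by linarith) hc
  have hb : (0:ℝ) < z/c := by positivity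
  have hab : (c - z)/c + z/c = 1 := by field_simp; ring
  have h := strictConvexOn_exp.2 (Set.mem_univ (0:ℝ)) (Set.mem_univ c)
    (by linarith : (0:ℝ) ≠ c) ha hb hab
  simp only [smul_eq_mul, mul_zero, zero_add, Real.exp_zero, mul_one] at h
  have hzz : z / c * c = z := by field_simp
  rw [hzz, hec] at h
  have he : (c - z)/c + z/c * (1 + 2*c) = 1 + 2*z := by field_simp; ring
  linarith [he ▸ h]

private lemma conv_gt' {c : ℝ} (hc : 0 < c) (hec : Real.exp c = 1 + 2 * c)
    {z : ℝ} (hcz : c < z) : 1 + 2 * z < Real.exp z := by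
  have hz : 0 < z := hc.trans hcz
  have ha : (0:ℝ) < (z - c)/z := div_pos (by linarith) hz
  have hb : (0:ℝ) < c/z := by positivity
  have hab : (z - c)/z + c/z = 1 := by field_simp; ring
  have h := strictConvexOn_exp.2 (Set.mem_univ (0:ℝ)) (Set.mem_univ z)
    (by linarith : (0:ℝ) ≠ z) ha hb hab
  simp only [smul_eq_mul, mul_zero, zero_add, Real.exp_zero, mul_one] at h
  have hcc : c / z * z = c := by field_simp
  rw [hcc, hec] at h
  have key : c / z * Real.exp z > 1 + 2*c - (z-c)/z := by linarith
  have h2 : 1 + 2*c - (z-c)/z = c/z * (1 + 2*z) := by field_simp; ring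
  rw [h2] at key
  exact (mul_lt_mul_iff_right₀ hb).mp key

private lemma gderiv' {z : ℝ} (hz : 0 < z) :
    HasDerivAt (fun y : ℝ => (1 - Real.exp (-y)) ^ 2 / y)
      ((2 * (1 - Real.exp (-z)) * Real.exp (-z) * z - (1 - Real.exp (-z)) ^ 2) / z ^ 2) z := by
  have h1 : HasDerivAt (fun y : ℝ => (1 - Real.exp (-y)) ^ 2)
      (2 * (1 - Real.exp (-z)) * Real.exp (-z)) z := by
    have he : HasDerivAt (fun y : ℝ => Real.exp (-y)) (-Real.exp (-z)) z := by
      simpa [Function.comp_def] using (Real.hasDerivAt_exp (-z)).comp z ((hasDerivAt_id z).neg)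
    have h := ((hasDerivAt_const z (1:ℝ)).sub he).pow 2
    refine h.congr_deriv ?_; simp only [Pi.sub_apply]; push_cast; ring
  have h2 := h1.div (hasDerivAt_id z) hz.ne'
  refine h2.congr_deriv ?_
  simp only [id]
  ring

private lemma gcont' {a : ℝ} (ha : 0 < a) :
    ContinuousOn (fun y : ℝ => (1 - Real.exp (-y)) ^ 2 / y) (Set.Ici a) :=
  ContinuousOn.div
    (((continuous_const.sub (Real.continuous_exp.comp continuous_neg)).pow 2).continuousOn)
    continuousOn_id (fun z hz => (lt_of_lt_of_le ha hz).ne')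

/-- There is a unique `x* > 0` with `exp(x*) = 1 + 2x*`; moreover `1.25 < x* < 1.27`,
the function `g(x) = (1 − e^{−x})²/x` attains its global maximum over `(0,∞)` at `x*`,
and `6.5 < 16·g(x*) < 6.6` and `3.2 < 8·g(x*) < 3.3`. -/
theorem optimal_interrogation_time :
    ∃ x : ℝ, (0 < x ∧ Real.exp x = 1 + 2 * x)
      ∧ (∀ y : ℝ, 0 < y ∧ Real.exp y = 1 + 2 * y → y = x)
      ∧ (1.25 < x ∧ x < 1.27)
      ∧ (∀ y : ℝ, 0 < y →
          (1 - Real.exp (-y)) ^ 2 / y ≤ (1 - Real.exp (-x)) ^ 2 / x)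
      ∧ (6.5 < 16 * ((1 - Real.exp (-x)) ^ 2 / x)
          ∧ 16 * ((1 - Real.exp (-x)) ^ 2 / x) < 6.6)
      ∧ (3.2 < 8 * ((1 - Real.exp (-x)) ^ 2 / x)
          ∧ 8 * ((1 - Real.exp (-x)) ^ 2 / x) < 3.3) := by
  -- existence of root in (1.25, 1.26) by IVT
  set f : ℝ → ℝ := fun x => Real.exp x - (1 + 2 * x) with hf
  have hfc : ContinuousOn f (Set.Icc 1.25 1.26) :=
    (Real.continuous_exp.sub (by continuity)).continuousOn
  have hmem : (0:ℝ) ∈ Set.Ioo (f 1.25) (f 1.26) := by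
    constructor
    · simp only [hf]; have := exp_below'; norm_num; linarith
    · simp only [hf]; have := exp_above'; norm_num; linarith
  obtain ⟨c, hcIoo, hfc0⟩ := intermediate_value_Ioo (by norm_num : (1.25:ℝ) ≤ 1.26) hfc hmem
  have hc1 : (1.25:ℝ) < c := hcIoo.1
  have hc2 : c < 1.26 := hcIoo.2
  have hc0 : 0 < c := by linarith
  have hec : Real.exp c = 1 + 2 * c := by
    have : Real.exp c - (1 + 2 * c) = 0 := hfc0
    linarith
  refine ⟨c, ⟨hc0, hec⟩, ?_, ⟨hc1, by linarith⟩, ?_, ?_, ?_⟩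
  · -- uniqueness
    rintro y ⟨hy0, hey⟩
    rcases lt_trichotomy y c with h | h | h
    · exact absurd hey (by have := conv_lt' hc0 hec hy0 h; linarith)
    · exact h
    · exact absurd hey (by have := conv_gt' hc0 hec h; linarith)
  · -- global maximum
    intro y hy0
    rcases lt_trichotomy y c with h | h | h
    · -- increasing on [y, c]
      have mono : StrictMonoOn (fun y : ℝ => (1 - Real.exp (-y)) ^ 2 / y) (Set.Icc y c) := by
        apply strictMonoOn_of_deriv_pos (convex_Icc y c)
          ((gcont' hy0).mono (Set.Icc_subset_Ici_self))
        intro z hz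
        rw [interior_Icc] at hz
        have hz0 : 0 < z := hy0.trans hz.1
        rw [HasDerivAt.deriv (gderiv' hz0)]
        apply div_pos _ (by positivity)
        have hE : 1 < Real.exp z := by have := Real.add_one_le_exp z; linarith
        have hlt : Real.exp z < 1 + 2 * z := conv_lt' hc0 hec hz0 hz.2
        have hee : Real.exp (-z) * Real.exp z = 1 := by
          rw [← Real.exp_add]; simp
        have hep : 0 < Real.exp (-z) := Real.exp_pos _
        have hid : 2 * (1 - Real.exp (-z)) * Real.exp (-z) * z - (1 - Real.exp (-z)) ^ 2
            = Real.exp (-z) ^ 2 * ((Real.exp z - 1) * (1 + 2 * z - Real.exp z)) := by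
          linear_combination (Real.exp (-z) * Real.exp z + 1 - 2 * Real.exp (-z)
            - 2 * Real.exp (-z) * z) * hee
        rw [hid]
        exact mul_pos (pow_pos hep 2)
          (mul_pos (sub_pos.mpr hE) (sub_pos.mpr hlt))
      exact (mono (Set.left_mem_Icc.mpr h.le) (Set.right_mem_Icc.mpr h.le) h).le
    · rw [h]
    · -- decreasing on [c, y]
      have anti : StrictAntiOn (fun y : ℝ => (1 - Real.exp (-y)) ^ 2 / y) (Set.Icc c y) := by
        apply strictAntiOn_of_deriv_neg (convex_Icc c y)
          ((gcont' hc0).mono (Set.Icc_subset_Ici_self))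
        intro z hz
        rw [interior_Icc] at hz
        have hz0 : 0 < z := hc0.trans hz.1
        rw [HasDerivAt.deriv (gderiv' hz0)]
        apply div_neg_of_neg_of_pos _ (by positivity)
        have hE : 1 < Real.exp z := by have := Real.add_one_le_exp z; linarith
        have hgt : 1 + 2 * z < Real.exp z := conv_gt' hc0 hec hz.1
        have hee : Real.exp (-z) * Real.exp z = 1 := by
          rw [← Real.exp_add]; simp
        have hep : 0 < Real.exp (-z) := Real.exp_pos _
        have hid : 2 * (1 - Real.exp (-z)) * Real.exp (-z) * z - (1 - Real.exp (-z)) ^ 2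
            = Real.exp (-z) ^ 2 * ((Real.exp z - 1) * (1 + 2 * z - Real.exp z)) := by
          linear_combination (Real.exp (-z) * Real.exp z + 1 - 2 * Real.exp (-z)
            - 2 * Real.exp (-z) * z) * hee
        rw [hid]
        exact mul_neg_of_pos_of_neg (pow_pos hep 2)
          (mul_neg_of_pos_of_neg (sub_pos.mpr hE) (by linarith))
      exact (anti (Set.left_mem_Icc.mpr h.le) (Set.right_mem_Icc.mpr h.le) h).le
  all_goals
    have hg : (1 - Real.exp (-c)) ^ 2 / c = 4 * c / (1 + 2 * c) ^ 2 := by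
      rw [Real.exp_neg, hec]
      have h1 : (0:ℝ) < 1 + 2 * c := by linarith
      field_simp
      ring
  all_goals have hs : (0:ℝ) < (1 + 2 * c) ^ 2 := by positivity
  · constructor
    · rw [hg, show (16:ℝ) * (4 * c / (1 + 2 * c) ^ 2) = 64 * c / (1 + 2 * c) ^ 2 by ring,
        lt_div_iff₀ hs]
      nlinarith
    · rw [hg, show (16:ℝ) * (4 * c / (1 + 2 * c) ^ 2) = 64 * c / (1 + 2 * c) ^ 2 by ring,
        div_lt_iff₀ hs]
      nlinarith
  · constructor
    · rw [hg, show (8:ℝ) * (4 * c / (1 + 2 * c) ^ 2) = 32 * c / (1 + 2 * c) ^ 2 by ring,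
        lt_div_iff₀ hs]
      nlinarith
    · rw [hg, show (8:ℝ) * (4 * c / (1 + 2 * c) ^ 2) = 32 * c / (1 + 2 * c) ^ 2 by ring,
        div_lt_iff₀ hs]
      nlinarith
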